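/- Let L be a finite abelian group with symplectic self-duality ∇ and G a maximal isotropic subgroup. Define f : G → L as the inclusion and q : L → dual(G) by q(x)(g) = ∇(g)(x). Then the sequence 0 → G → L → dual(G) → 0 is exact, and the diagram comparing it with its Pontryagin dual 0 → G → dual(L) → dual(G) → 0 (with maps dual(q), dual(f)) commutes with vertical maps (id_G, ∇, −id_{dual(G)}). In particular, ker q = G and q is surjective. -/

import Mathlib

/-- ℚ/ℤ, the dualizing object for finite abelian groups. -/
abbrev QZ : Type := AddCircle (1 : ℚ)

/-- The annihilator of a subgroup `H` of `G` inside the character group of `G`. -/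
def perp {G : Type*} [AddCommGroup G] (H : AddSubgroup G) : AddSubgroup (G →+ QZ) where
  carrier := {χ : G →+ QZ | ∀ g ∈ H, χ g = 0}
  zero_mem' := by intro g _; simp
  add_mem' := by intro a b ha hb g hg; simp [ha g hg, hb g hg]
  neg_mem' := by intro a ha g hg; simp [ha g hg]

lemma skew {L : Type} [AddCommGroup L] (nabla : L ≃+ (L →+ QZ))
    (hsymp : ∀ x : L, nabla x x = 0) (x y : L) : nabla x y = -(nabla y x) := by
  have h := hsymp (x + y)
  simp only [map_add, AddMonoidHom.add_apply, hsymp x, hsymp y] at h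
  rw [eq_neg_iff_add_eq_zero]
  linear_combination (norm := abel_nf) h

/-- For a maximal isotropic subgroup `G` of a finite abelian group `L` with symplectic
self-duality `∇`, with `f : G → L` the inclusion and `q : L → dual G` given by
`q(x)(g) = ∇(g)(x)`, the sequence `0 → G → L → dual G → 0` is exact (`f` injective,
`ker q = G`, `q` surjective), and the comparison diagram with the dual sequence
commutes with vertical maps `(id_G, ∇, −id_{dual G})`: the left square is
`∇(f(g))(x) = q(x)(g)` and the right square is `∇(x)(f(g)) = −q(x)(g)`. -/
theorem statement19 (L : Type) [AddCommGroup L] [Fintype L]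
    (nabla : L ≃+ (L →+ QZ)) (hsymp : ∀ x : L, nabla x x = 0)
    (G : AddSubgroup L)
    (hmax : AddSubgroup.comap nabla.toAddMonoidHom (perp G) = G)
    (q : L →+ (G →+ QZ))
    (hq : ∀ (x : L) (g : G), q x g = nabla (g : L) x) :
    Function.Injective G.subtype ∧
    q.ker = G ∧
    Function.Surjective q ∧
    (∀ (g : G) (x : L), nabla (G.subtype g) x = q x g) ∧
    (∀ (x : L) (g : G), nabla x (G.subtype g) = -(q x g)) := by
  refine ⟨G.subtype_injective, ?_, ?_, ?_, ?_⟩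
  · ext x
    constructor
    · intro hx
      rw [← hmax]
      intro g hg
      show (nabla x) g = 0
      have : q x ⟨g, hg⟩ = 0 := by
        rw [AddMonoidHom.mem_ker] at hx
        rw [hx]; rfl
      rw [hq] at this
      rw [skew nabla hsymp x g, this, neg_zero]
    · intro hx
      rw [AddMonoidHom.mem_ker]
      ext g
      rw [hq]
      have hg : (g : L) ∈ G := g.2
      rw [← hmax] at hx
      have h2 : (nabla x) (g : L) = 0 := hx (g : L) hg
      rw [skew nabla hsymp (g : L) x, h2, neg_zero]
      rfl
  · intro χ
    obtain ⟨c, hc⟩ := CharacterModule.dual_surjective_of_injective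
      (R := ℤ) G.subtype.toIntLinearMap G.subtype_injective (-χ)
    refine ⟨nabla.symm c, ?_⟩
    ext g
    rw [hq, skew nabla hsymp (g : L) (nabla.symm c)]
    erw [AddEquiv.apply_symm_apply]
    have : c (g : L) = (-χ) g := congrFun (congrArg DFunLike.coe hc) g
    erw [this]
    simp
  · intro g x
    rw [hq]; rfl
  · intro x g
    rw [hq]
    exact skew nabla hsymp x (g : L)
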